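/- Let p be a prime, r ≥ 1, and x an integer not divisible by p^r - 1. Then [x]_{p,r} = (p-1) · Σ_{i=0}^{r-1} {p^i x / (p^r - 1)}, where {·} denotes the fractional part. -/

import Mathlib

open Finset

/-- The sum of the base-`p` digits of the representative `y` of `z` mod `p^r - 1`
with `1 ≤ y ≤ p^r - 1`; by convention it is `r*(p-1)` when `p^r - 1 ∣ z`. -/
def brSum (p r : ℕ) (z : ℤ) : ℕ :=
  if ((p : ℤ) ^ r - 1) ∣ z then r * (p - 1)
  else (Nat.digits p (z % ((p : ℤ) ^ r - 1)).toNat).sum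

/-- partial digit expansion -/
lemma sumDigitsPow (p : ℕ) : ∀ (k y : ℕ), ∑ j ∈ range k, (y / p^j % p) * p^j = y % p^k := by
  intro k
  induction k with
  | zero => intro y; rw [pow_zero, Nat.mod_one]; simp
  | succ k ih =>
    intro y
    rw [Finset.sum_range_succ, ih, pow_succ, Nat.mod_mul, mul_comm (p^k)]

/-- natural number geometric sum -/
lemma geomNat (p : ℕ) (hp : 1 ≤ p) : ∀ r : ℕ, (p - 1) * ∑ j ∈ range r, p ^ j = p ^ r - 1 := by
  intro r
  induction r with
  | zero => simp
  | succ r ih =>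
    have h1 : 1 ≤ p ^ r := Nat.one_le_pow _ _ (by omega)
    have h2 : p ^ r ≤ p * p ^ r := Nat.le_mul_of_pos_left _ (by omega)
    rw [Finset.sum_range_succ, Nat.mul_add, ih, Nat.sub_mul, one_mul, pow_succ,
      mul_comm (p^r) p]
    omega

/-- digit sum as finite sum -/
lemma digitsSumEq (p : ℕ) (hp : 2 ≤ p) : ∀ (r y : ℕ), y < p ^ r →
    (Nat.digits p y).sum = ∑ j ∈ range r, y / p^j % p := by
  intro r
  induction r with
  | zero =>
    intro y hy
    simp only [pow_zero] at hy
    interval_cases y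
    simp
  | succ r ih =>
    intro y hy
    rcases Nat.eq_zero_or_pos y with h0 | h0
    · subst h0; simp [Nat.zero_div]
    · obtain ⟨p', rfl⟩ : ∃ p', p = p' + 2 := ⟨p - 2, by omega⟩
      rw [Nat.digits_def' (by omega) h0]
      have hd : y / (p' + 2) < (p' + 2) ^ r := by
        rw [Nat.div_lt_iff_lt_mul (by omega), ← pow_succ]
        exact hy
      rw [List.sum_cons, ih _ hd, Finset.sum_range_succ']
      rw [add_comm]
      congr 1
      · apply Finset.sum_congr rfl
        intro j _
        rw [Nat.div_div_eq_div_mul, ← pow_succ']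
      · simp

/-- rotation sum -/
lemma rotSum (p r c : ℕ) (hr : 0 < r) :
    ∑ k ∈ range r, p ^ ((c + k) % r) = ∑ k ∈ range r, p ^ k := by
  have : NeZero r := ⟨hr.ne'⟩
  rw [Finset.sum_range (fun k => p ^ ((c + k) % r)), Finset.sum_range (fun k => p ^ k)]
  open Fin.NatCast in rw [← Equiv.sum_comp (Equiv.addRight (c : Fin r)) (fun i : Fin r => p ^ (i : ℕ))]
  apply Finset.sum_congr rfl
  intro i _
  congr 1
  simp [Equiv.addRight, Fin.add_def, Nat.add_mod, Nat.add_comm]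

lemma rotSum' (p r c : ℕ) (hr : 0 < r) :
    ∑ k ∈ range r, p ^ ((k + c) % r) = ∑ k ∈ range r, p ^ k := by
  rw [← rotSum p r c hr]
  apply Finset.sum_congr rfl
  intro k _
  rw [add_comm]

/-- the mod of p^i * y is the digit rotation -/
lemma rotMod (p r i y : ℕ) (hp : 2 ≤ p) (hr : 0 < r) (hy : y < p ^ r - 1) :
    (p ^ i * y) % (p ^ r - 1) = ∑ j ∈ range r, (y / p^j % p) * p ^ ((i + j) % r) := by
  have hpr : 2 ≤ p ^ r := hp.trans (Nat.le_self_pow (by omega) p)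
  set n := p ^ r - 1 with hn
  have hn1 : 1 ≤ n := by omega
  set S := ∑ j ∈ range r, (y / p^j % p) * p ^ ((i + j) % r) with hS
  have hub : ∀ j ∈ range r, (y / p^j % p) * p ^ ((i + j) % r) ≤ (p-1) * p ^ ((i + j) % r) := by
    intro j _
    exact Nat.mul_le_mul_right _ (by have := Nat.mod_lt (y / p^j) (show 0 < p by omega); omega)
  have hex : ∃ j ∈ range r, y / p^j % p < p - 1 := by
    by_contra h
    push_neg at h
    have hall : ∀ j ∈ range r, y / p^j % p = p - 1 := by
      intro j hj
      have := Nat.mod_lt (y / p^j) (show 0 < p by omega)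
      have := h j hj
      omega
    have hid := sumDigitsPow p r y
    rw [Finset.sum_congr rfl (fun j hj => by rw [hall j hj])] at hid
    rw [← Finset.mul_sum, geomNat p (by omega) r, Nat.mod_eq_of_lt (by omega)] at hid
    omega
  obtain ⟨j0, hj0, hj0lt⟩ := hex
  have hSlt : S < n := by
    have h1 : S < ∑ j ∈ range r, (p-1) * p ^ ((i + j) % r) :=
      Finset.sum_lt_sum hub ⟨j0, hj0,
        (Nat.mul_lt_mul_right (Nat.pow_pos (by omega))).mpr hj0lt⟩
    have h2 : ∑ j ∈ range r, (p-1) * p ^ ((i + j) % r) = (p-1) * ∑ j ∈ range r, p ^ j := by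
      rw [← Finset.mul_sum, rotSum p r i hr]
    have h3 : (p-1) * ∑ j ∈ range r, p ^ j = n := geomNat p (by omega) r
    omega
  have hcong : (p ^ i * y) ≡ S [MOD n] := by
    rw [← ZMod.natCast_eq_natCast_iff, hS]
    push_cast
    have hpow : (p : ZMod n) ^ r = 1 := by
      have h4 : ((p ^ r : ℕ) : ZMod n) = ((n + 1 : ℕ) : ZMod n) := by congr 1; omega
      push_cast at h4
      simpa using h4
    have hrot : ∀ a : ℕ, (p : ZMod n) ^ (a % r) = (p : ZMod n) ^ a := by
      intro a
      conv_rhs => rw [← Nat.div_add_mod a r]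
      rw [pow_add, pow_mul, hpow, one_pow, one_mul]
    have expand : ((y : ℕ) : ZMod n)
        = ∑ j ∈ range r, ((y / p^j % p : ℕ) : ZMod n) * (p : ZMod n)^j := by
      have h5 := sumDigitsPow p r y
      rw [Nat.mod_eq_of_lt (by omega)] at h5
      calc ((y : ℕ) : ZMod n) = ((∑ j ∈ range r, (y / p^j % p) * p^j : ℕ) : ZMod n) := by
            rw [h5]
        _ = _ := by push_cast; ring
    calc (p : ZMod n)^i * (y : ZMod n)
        = ∑ j ∈ range r, ((y / p^j % p : ℕ) : ZMod n) * (p : ZMod n)^(i+j) := by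
          rw [expand, Finset.mul_sum]
          apply Finset.sum_congr rfl
          intro j _
          rw [pow_add]; ring
      _ = ∑ j ∈ range r, ((y / p^j % p : ℕ) : ZMod n) * (p : ZMod n)^((i+j) % r) := by
          apply Finset.sum_congr rfl
          intro j _
          rw [hrot (i + j)]
  calc (p ^ i * y) % n = S % n := hcong
  _ = S := Nat.mod_eq_of_lt hSlt

theorem brSum_eq_fract_sum (p r : ℕ) (hp : p.Prime) (hr : 1 ≤ r) (x : ℤ)
    (hx : ¬ ((p : ℤ) ^ r - 1) ∣ x) :
    (brSum p r x : ℝ) =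
      ((p : ℝ) - 1) * ∑ i ∈ Finset.range r,
        Int.fract ((p : ℝ) ^ i * (x : ℝ) / ((p : ℝ) ^ r - 1)) := by
  have hp2 : 2 ≤ p := hp.two_le
  have hr0 : 0 < r := hr
  have hpr : 2 ≤ p ^ r := hp2.trans (Nat.le_self_pow (by omega) p)
  set n : ℕ := p ^ r - 1 with hn
  have hnZ : ((n : ℕ) : ℤ) = (p : ℤ)^r - 1 := by
    rw [hn, Nat.cast_sub (by omega : 1 ≤ p ^ r)]
    push_cast
    ring
  have hN0 : (0 : ℤ) < (p : ℤ)^r - 1 := by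
    rw [← hnZ]
    exact_mod_cast (by omega : 0 < n)
  set y : ℕ := (x % ((p : ℤ)^r - 1)).toNat with hy
  have hxmod : 0 ≤ x % ((p : ℤ)^r - 1) := Int.emod_nonneg x (ne_of_gt hN0)
  have hxlt : x % ((p : ℤ)^r - 1) < (p : ℤ)^r - 1 := Int.emod_lt_of_pos x hN0
  have hxy : ((y : ℕ) : ℤ) = x % ((p : ℤ)^r - 1) := Int.toNat_of_nonneg hxmod
  have hylt : y < n := by
    have : ((y : ℕ) : ℤ) < ((n : ℕ) : ℤ) := by rw [hxy, hnZ]; exact hxlt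
    exact_mod_cast this
  have hNR0 : ((p : ℝ)^r - 1) ≠ 0 := by
    have h2 : (2 : ℝ) ≤ (p : ℝ)^r := by exact_mod_cast hpr
    linarith
  -- the key per-term identity
  have key : ∀ i : ℕ, Int.fract ((p : ℝ)^i * (x : ℝ) / ((p : ℝ)^r - 1))
      = ((p^i * y % n : ℕ) : ℝ) / ((p : ℝ)^r - 1) := by
    intro i
    have hMR : (((p : ℤ)^r - 1 : ℤ) : ℝ) = (p : ℝ)^r - 1 := by push_cast; ring
    rw [← hMR]
    set M : ℤ := (p : ℤ)^r - 1 with hM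
    have hMne : ((M : ℤ) : ℝ) ≠ 0 := Int.cast_ne_zero.mpr (ne_of_gt hN0)
    have hMpos : (0 : ℝ) < ((M : ℤ) : ℝ) := by exact_mod_cast hN0
    set a : ℤ := (p : ℤ)^i * x % M with ha
    have h0a : 0 ≤ a := Int.emod_nonneg _ (ne_of_gt hN0)
    have h1a : a < M := Int.emod_lt_of_pos _ hN0
    have hq := Int.mul_ediv_add_emod ((p : ℤ)^i * x) M
    have hqR : ((M : ℤ) : ℝ) * (((p : ℤ)^i * x / M : ℤ) : ℝ) + ((a : ℤ) : ℝ)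
        = (p : ℝ)^i * (x : ℝ) := by
      have h6 := congrArg (fun z : ℤ => (z : ℝ)) hq
      push_cast at h6
      convert h6 using 2
    have hfrac : (p : ℝ)^i * (x : ℝ) / ((M : ℤ) : ℝ)
        = (((p : ℤ)^i * x / M : ℤ) : ℝ) + ((a : ℤ) : ℝ) / ((M : ℤ) : ℝ) := by
      rw [← hqR]
      field_simp
    rw [hfrac, Int.fract_intCast_add, Int.fract_eq_self.mpr
      ⟨div_nonneg (by exact_mod_cast h0a) hMpos.le,
       (div_lt_one hMpos).mpr (by exact_mod_cast h1a)⟩]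
    congr 1
    have heq : a = ((p^i * y % n : ℕ) : ℤ) := by
      have h1 : (p : ℤ)^i * x % M = (p : ℤ)^i * (y : ℤ) % M := by
        rw [Int.mul_emod, Int.mul_emod ((p : ℤ)^i) (y : ℤ), hxy,
          Int.emod_emod_of_dvd _ dvd_rfl]
      rw [ha, h1, Int.natCast_mod, hnZ]
      push_cast
      ring_nf
    rw [heq]
    norm_cast
  rw [Finset.sum_congr rfl (fun i _ => key i), ← Finset.sum_div, ← Nat.cast_sum]
  have hsum : ∑ i ∈ range r, (p^i * y % n)
      = (Nat.digits p y).sum * (∑ k ∈ range r, p^k) := by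
    calc ∑ i ∈ range r, (p^i * y % n)
        = ∑ i ∈ range r, ∑ j ∈ range r, (y / p^j % p) * p^((i+j) % r) :=
          Finset.sum_congr rfl fun i _ => rotMod p r i y hp2 hr0 (by omega)
      _ = ∑ j ∈ range r, (y / p^j % p) * ∑ i ∈ range r, p^((i+j) % r) := by
          rw [Finset.sum_comm]
          exact Finset.sum_congr rfl fun j _ => (Finset.mul_sum _ _ _).symm
      _ = ∑ j ∈ range r, (y / p^j % p) * ∑ k ∈ range r, p^k :=
          Finset.sum_congr rfl fun j _ => by rw [rotSum' p r j hr0]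
      _ = (∑ j ∈ range r, y / p^j % p) * ∑ k ∈ range r, p^k := by rw [Finset.sum_mul]
      _ = (Nat.digits p y).sum * (∑ k ∈ range r, p^k) := by
          rw [digitsSumEq p hp2 r y (by omega)]
  rw [hsum]
  have hbr : brSum p r x = (Nat.digits p y).sum := by
    rw [brSum, if_neg hx]
  rw [hbr]
  have hgeom : ((p : ℝ) - 1) * ∑ k ∈ range r, (p : ℝ)^k = (p : ℝ)^r - 1 := by
    have := geom_sum_mul (p : ℝ) r
    linarith [this]
  push_cast
  field_simp
  rw [← hgeom]
  ring
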